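/- Let K ⊆ ℝ² be a compact convex set with nonempty interior, and let P be an extreme point of K. Then the set of angles θ (taken in ℝ/2πℤ) such that the support line L_θ of K contains P is a closed arc of length strictly less than π, where L_θ denotes the support line of K in direction θ (the line containing a ray making angle θ with the x-axis that has K on its left side). -/

import Mathlib

open Real Set

noncomputable section

/-- The plane. -/
abbrev Plane := EuclideanSpace ℝ (Fin 2)

/-- 2D cross product. -/
def crossProd (u v : Plane) : ℝ := u 0 * v 1 - u 1 * v 0

/-- Unit vector in direction θ. -/
def dirVec (θ : ℝ) : Plane := WithLp.toLp 2 ![Real.cos θ, Real.sin θ]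

/-- The support line of `K` in direction `θ`: the line with direction `(cos θ, sin θ)`
having `K` on its closed left side and touching `K`. -/
def suppLine (K : Set Plane) (θ : ℝ) : Set Plane :=
  {x | crossProd (dirVec θ) x = sInf ((fun p => crossProd (dirVec θ) p) '' K)}

/-- Convex hull of the image of an arc parametrized on `[0,1]`. -/
def hullOf (γ : ℝ → Plane) : Set Plane := convexHull ℝ (γ '' Icc 0 1)

/-- Parameters at which the arc touches the support line of its hull in direction θ. -/
def touchSet (γ : ℝ → Plane) (θ : ℝ) : Set ℝ :=
  {s ∈ Icc (0:ℝ) 1 | γ s ∈ suppLine (hullOf γ) θ}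

/-- The multi-valued function `T`: the extreme touching parameters. -/
def T (γ : ℝ → Plane) (θ : ℝ) : Set ℝ :=
  {sInf (touchSet γ θ), sSup (touchSet γ θ)}

/-- `γ` is piecewise linear ("polygonal") on `[0,1]`. -/
def IsPolygonal (γ : ℝ → Plane) : Prop :=
  ∃ (n : ℕ) (t : Fin (n + 1) → ℝ), t 0 = 0 ∧ t (Fin.last n) = 1 ∧ StrictMono t ∧
    ∀ i : Fin n, ∀ s ∈ Icc (t i.castSucc) (t i.succ),
      γ s = γ (t i.castSucc) + ((s - t i.castSucc) / (t i.succ - t i.castSucc)) •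
        (γ (t i.succ) - γ (t i.castSucc))

/-- The set of directions (within one period) whose support line passes through `P`. -/
def touchAngles (K : Set Plane) (P : Plane) : Set ℝ := {θ ∈ Ico 0 (2*π) | P ∈ suppLine K θ}

/-- The exterior angle of a convex body `K` at a boundary point `P`, measured as the
length of the set of support directions through `P`. -/
def extAngle (K : Set Plane) (P : Plane) : ℝ := (MeasureTheory.volume (touchAngles K P)).toReal

/-- Largest parameter of a hull corner (extreme point). -/
def tLast (γ : ℝ → Plane) : ℝ :=
  sSup {s ∈ Icc (0:ℝ) 1 | γ s ∈ Set.extremePoints ℝ (hullOf γ)}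

/-- Smallest parameter of a hull corner (extreme point). -/
def tFirst (γ : ℝ → Plane) : ℝ :=
  sInf {s ∈ Icc (0:ℝ) 1 | γ s ∈ Set.extremePoints ℝ (hullOf γ)}

/-- The pair of support lines `L_θ`, `L_{θ+δ}` has *triple points*: parameters
`s₁ < s₂ < s₃` with the middle point on one line and the outer two on the other. -/
def HasTriple (γ : ℝ → Plane) (θ δ : ℝ) : Prop :=
  ∃ s₁ s₂ s₃ : ℝ, s₁ ∈ Icc (0:ℝ) 1 ∧ s₂ ∈ Icc (0:ℝ) 1 ∧ s₃ ∈ Icc (0:ℝ) 1 ∧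
    s₁ < s₂ ∧ s₂ < s₃ ∧
    ((γ s₂ ∈ suppLine (hullOf γ) θ ∧ γ s₁ ∈ suppLine (hullOf γ) (θ + δ) ∧
        γ s₃ ∈ suppLine (hullOf γ) (θ + δ)) ∨
     (γ s₂ ∈ suppLine (hullOf γ) (θ + δ) ∧ γ s₁ ∈ suppLine (hullOf γ) θ ∧
        γ s₃ ∈ suppLine (hullOf γ) θ))

/-! ### Auxiliary lemmas -/

lemma crossProd_dirVec (θ : ℝ) (x : Plane) :
    crossProd (dirVec θ) x = Real.cos θ * x 1 - Real.sin θ * x 0 := by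
  simp [crossProd, dirVec]

lemma dirVec_periodic (θ : ℝ) (k : ℤ) : dirVec (θ + 2*π*k) = dirVec θ := by
  unfold dirVec
  rw [show θ + 2*π*(k:ℝ) = θ + k*(2*π) by ring, Real.cos_add_int_mul_two_pi,
    Real.sin_add_int_mul_two_pi]

lemma cross_cont (θ : ℝ) : Continuous fun x : Plane => crossProd (dirVec θ) x := by
  simp only [crossProd_dirVec]
  exact (continuous_const.mul ((EuclideanSpace.proj (1 : Fin 2)).continuous)).sub
    (continuous_const.mul ((EuclideanSpace.proj (0 : Fin 2)).continuous))

lemma mem_suppLine_iff {K : Set Plane} (hK : IsCompact K) {P : Plane} (hPK : P ∈ K) (θ : ℝ) :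
    P ∈ suppLine K θ ↔ ∀ x ∈ K, crossProd (dirVec θ) P ≤ crossProd (dirVec θ) x := by
  have hbdd : BddBelow ((fun p => crossProd (dirVec θ) p) '' K) :=
    (hK.image (cross_cont θ)).bddBelow
  constructor
  · intro h x hx
    rw [show crossProd (dirVec θ) P = _ from h]
    exact csInf_le hbdd ⟨x, hx, rfl⟩
  · intro h
    refine le_antisymm ?_ (csInf_le hbdd ⟨P, hPK, rfl⟩)
    exact le_csInf ⟨_, ⟨P, hPK, rfl⟩⟩ (by rintro _ ⟨x, hx, rfl⟩; exact h x hx)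

lemma cross_between {K : Set Plane} {P : Plane} {θ₁ θ₂ θ : ℝ}
    (h1 : ∀ x ∈ K, crossProd (dirVec θ₁) P ≤ crossProd (dirVec θ₁) x)
    (h2 : ∀ x ∈ K, crossProd (dirVec θ₂) P ≤ crossProd (dirVec θ₂) x)
    (hle1 : θ₁ ≤ θ) (hle2 : θ ≤ θ₂) (hlt : θ₁ < θ₂) (hpi : θ₂ - θ₁ < π) :
    ∀ x ∈ K, crossProd (dirVec θ) P ≤ crossProd (dirVec θ) x := by
  intro x hx
  have hA := h1 x hx; have hB := h2 x hx
  have hs : 0 < Real.sin (θ₂ - θ₁) := Real.sin_pos_of_pos_of_lt_pi (by linarith) hpi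
  have ha : 0 ≤ Real.sin (θ₂ - θ) :=
    Real.sin_nonneg_of_nonneg_of_le_pi (by linarith) (by linarith)
  have hb : 0 ≤ Real.sin (θ - θ₁) :=
    Real.sin_nonneg_of_nonneg_of_le_pi (by linarith) (by linarith)
  have key : ∀ w : Plane, Real.sin (θ₂ - θ₁) * crossProd (dirVec θ) w
      = Real.sin (θ₂ - θ) * crossProd (dirVec θ₁) w
        + Real.sin (θ - θ₁) * crossProd (dirVec θ₂) w := by
    intro w
    simp only [crossProd_dirVec, Real.sin_sub]
    ring
  have h3 := key x; have h4 := key P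
  nlinarith [mul_nonneg ha (sub_nonneg.2 hA), mul_nonneg hb (sub_nonneg.2 hB)]

lemma not_interior {K : Set Plane} {P : Plane} (hP : P ∈ Set.extremePoints ℝ K) :
    P ∉ interior K := by
  intro h
  rw [mem_interior_iff_mem_nhds, Metric.mem_nhds_iff] at h
  obtain ⟨ε, hε, hball⟩ := h
  set e : Plane := WithLp.toLp 2 ![ε/2, 0] with he
  have hne : ‖e‖ = ε/2 := by
    rw [EuclideanSpace.norm_eq]
    simp [he, Fin.sum_univ_two]
    rw [Real.sqrt_sq (by positivity)]
  have h1 : P - e ∈ K := hball (by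
    rw [Metric.mem_ball, dist_eq_norm]; simp [hne]; linarith)
  have h2 : P + e ∈ K := hball (by
    rw [Metric.mem_ball, dist_eq_norm]; simp [hne]; linarith)
  have hseg : P ∈ openSegment ℝ (P - e) (P + e) := by
    refine ⟨1/2, 1/2, by norm_num, by norm_num, by norm_num, ?_⟩
    module
  have := hP.2 h1 h2 hseg
  have he0 : e 0 = 0 := by
    have h' : P - e = P := this
    have := congrFun (congrArg (fun x : Plane => (x : Fin 2 → ℝ)) h') 0
    simpa using this
  rw [he] at he0
  simp at he0
  linarith

lemma interior_strict {K : Set Plane} {P Q : Plane} {θ : ℝ} (hQ : Q ∈ interior K)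
    (hS : ∀ x ∈ K, crossProd (dirVec θ) P ≤ crossProd (dirVec θ) x) :
    crossProd (dirVec θ) P < crossProd (dirVec θ) Q := by
  rcases lt_or_ge (crossProd (dirVec θ) P) (crossProd (dirVec θ) Q) with h | h
  · exact h
  exfalso
  have hQK : crossProd (dirVec θ) P ≤ crossProd (dirVec θ) Q := hS Q (interior_subset hQ)
  have heq : crossProd (dirVec θ) Q = crossProd (dirVec θ) P := le_antisymm h hQK
  rw [mem_interior_iff_mem_nhds, Metric.mem_nhds_iff] at hQ
  obtain ⟨ε, hε, hball⟩ := hQ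
  set w : Plane := WithLp.toLp 2 ![Real.sin θ, -Real.cos θ] with hw
  have hnw : ‖w‖ = 1 := by
    rw [EuclideanSpace.norm_eq]
    have : ∑ i : Fin 2, ‖w i‖ ^ 2 = 1 := by
      rw [Fin.sum_univ_two]
      simp only [Real.norm_eq_abs, sq_abs, hw]
      simp
    rw [this, Real.sqrt_one]
  have hmem : Q + (ε/2) • w ∈ K := hball (by
    rw [Metric.mem_ball, dist_eq_norm]
    simp only [add_sub_cancel_left, norm_smul, hnw]
    rw [Real.norm_eq_abs, abs_of_pos (by positivity)]
    linarith)
  have := hS _ hmem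
  have hval : crossProd (dirVec θ) (Q + (ε/2) • w) = crossProd (dirVec θ) Q - ε/2 := by
    simp only [crossProd_dirVec, PiLp.add_apply, PiLp.smul_apply, smul_eq_mul, hw]
    simp
    nlinarith [Real.sin_sq_add_cos_sq θ]
  rw [hval, heq] at this
  linarith

lemma exists_support {K : Set Plane} (hconv : Convex ℝ K) (hint : (interior K).Nonempty)
    {P : Plane} (hPK : P ∈ K) (hPnotint : P ∉ interior K) :
    ∃ θ : ℝ, ∀ x ∈ K, crossProd (dirVec θ) P ≤ crossProd (dirVec θ) x := by
  obtain ⟨f, hf⟩ := geometric_hahn_banach_open_point (hconv.interior) isOpen_interior hPnotint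
  have hle : ∀ x ∈ K, f x ≤ f P := by
    intro x hx
    obtain ⟨a, ha⟩ := hint
    have hseg : ∀ t : ℝ, 0 < t → t ≤ 1 → (1 - t) • x + t • a ∈ interior K := fun t ht ht1 =>
      hconv.combo_self_interior_mem_interior hx ha (by linarith) ht (by ring)
    have htend : Filter.Tendsto (fun t : ℝ => f ((1 - t) • x + t • a)) (nhdsWithin 0 (Set.Ioi 0))
        (nhds (f x)) := by
      have hc : Continuous fun t : ℝ => f ((1 - t) • x + t • a) := by
        exact f.continuous.comp (by continuity)
      have := hc.tendsto 0
      simp only [sub_zero, one_smul, zero_smul, add_zero] at this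
      exact this.mono_left nhdsWithin_le_nhds
    refine le_of_tendsto htend ?_
    filter_upwards [Ioo_mem_nhdsGT_of_mem (by norm_num : (0:ℝ) ∈ Ico (0:ℝ) 1)] with t ht
    exact (hf _ (hseg t ht.1 ht.2.le)).le
  set b0 : Plane := EuclideanSpace.single (0 : Fin 2) (1:ℝ) with hb0
  set b1 : Plane := EuclideanSpace.single (1 : Fin 2) (1:ℝ) with hb1
  set c0 : ℝ := f b0
  set c1 : ℝ := f b1
  have hdecomp : ∀ x : Plane, f x = x 0 * c0 + x 1 * c1 := by
    intro x
    have hx : x = x 0 • b0 + x 1 • b1 := by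
      ext i
      fin_cases i <;>
        simp [hb0, hb1, EuclideanSpace.single_apply]
    conv_lhs => rw [hx]
    rw [map_add, map_smul, map_smul]
    simp [smul_eq_mul]
    rfl
  have hcne : c0 ≠ 0 ∨ c1 ≠ 0 := by
    by_contra h
    push_neg at h
    obtain ⟨a, ha⟩ := hint
    have := hf a ha
    rw [hdecomp a, hdecomp P, h.1, h.2] at this
    simp at this
  have hpos2 : 0 < c0^2 + c1^2 := by
    rcases hcne with h | h
    · positivity
    · positivity
  set n : ℝ := Real.sqrt (c0^2 + c1^2) with hn
  have hnpos : 0 < n := Real.sqrt_pos.2 hpos2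
  set z : ℂ := ⟨-c1/n, c0/n⟩ with hz
  have habs : ‖z‖ = 1 := by
    rw [Complex.norm_def, Complex.normSq_mk]
    rw [show -c1 / n * (-c1 / n) + c0 / n * (c0 / n) = (c0^2 + c1^2) / n^2 by ring]
    rw [hn, Real.sq_sqrt hpos2.le, div_self hpos2.ne']
    exact Real.sqrt_one
  have hzne : z ≠ 0 := by
    intro h
    rw [h] at habs
    simp at habs
  refine ⟨Complex.arg z, ?_⟩
  intro x hx
  have hcos : Real.cos (Complex.arg z) = -c1/n := by
    rw [Complex.cos_arg hzne, habs]; simp [hz]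
  have hsin : Real.sin (Complex.arg z) = c0/n := by
    rw [Complex.sin_arg, habs]; simp [hz]
  have hfx := hle x hx
  rw [hdecomp x, hdecomp P] at hfx
  simp only [crossProd_dirVec, hcos, hsin]
  rw [div_mul_eq_mul_div, div_mul_eq_mul_div, div_mul_eq_mul_div, div_mul_eq_mul_div,
    div_sub_div_same, div_sub_div_same, div_le_div_iff_of_pos_right hnpos]
  linarith

/-- For a compact convex planar set with nonempty interior and an extreme point `P`,
the set of support directions through `P` is a closed arc (mod 2π) of length < π. -/
theorem extremePoint_support_arc (K : Set Plane) (hK : IsCompact K) (hconv : Convex ℝ K)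
    (hint : (interior K).Nonempty) (P : Plane) (hP : P ∈ Set.extremePoints ℝ K) :
    ∃ α l : ℝ, 0 ≤ l ∧ l < π ∧
      ∀ θ : ℝ, P ∈ suppLine K θ ↔ ∃ t ∈ Icc α (α + l), ∃ k : ℤ, θ = t + 2 * π * k := by
  have hPK : P ∈ K := hP.1
  have hPnotint : P ∉ interior K := not_interior hP
  obtain ⟨θ₀, hθ₀⟩ := exists_support hconv hint hPK hPnotint
  obtain ⟨Q, hQ⟩ := hint
  set Spred : ℝ → Prop :=
    fun θ => ∀ x ∈ K, crossProd (dirVec θ) P ≤ crossProd (dirVec θ) x with hSpred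
  have hmemiff : ∀ θ, P ∈ suppLine K θ ↔ Spred θ := fun θ => mem_suppLine_iff hK hPK θ
  have hperiod : ∀ θ (k : ℤ), Spred (θ + 2*π*k) ↔ Spred θ := by
    intro θ k
    simp only [hSpred]
    rw [dirVec_periodic]
  set d0 : ℝ := Q 0 - P 0 with hd0
  set d1 : ℝ := Q 1 - P 1 with hd1
  have hstrict : ∀ θ, Spred θ → 0 < Real.cos θ * d1 - Real.sin θ * d0 := by
    intro θ hθ
    have h := interior_strict hQ hθ
    simp only [crossProd_dirVec] at h
    rw [hd0, hd1]
    ring_nf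
    ring_nf at h
    linarith
  have hdne : ¬ (d0 = 0 ∧ d1 = 0) := by
    rintro ⟨h0, h1⟩
    have := hstrict θ₀ hθ₀
    rw [h0, h1] at this; simp at this
  have hpos2 : 0 < d0^2 + d1^2 := by
    rcases not_and_or.1 hdne with h | h
    · positivity
    · positivity
  set r : ℝ := Real.sqrt (d0^2 + d1^2) with hr
  have hrpos : 0 < r := Real.sqrt_pos.2 hpos2
  set z : ℂ := ⟨d0, d1⟩ with hz
  have habs : ‖z‖ = r := by
    rw [Complex.norm_def, Complex.normSq_mk,
      show d0 * d0 + d1 * d1 = d0^2 + d1^2 by ring, hr]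
  have hzne : z ≠ 0 := by
    intro h
    exact hdne ⟨congrArg Complex.re h, congrArg Complex.im h⟩
  set φ : ℝ := Complex.arg z with hφ
  have hd0eq : d0 = r * Real.cos φ := by
    rw [hφ, Complex.cos_arg hzne, habs, hz]
    field_simp
  have hd1eq : d1 = r * Real.sin φ := by
    rw [hφ, Complex.sin_arg, habs, hz]
    field_simp
  have hsinpos : ∀ θ, Spred θ → 0 < Real.sin (φ - θ) := by
    intro θ hθ
    have h := hstrict θ hθ
    rw [hd0eq, hd1eq] at h
    rw [Real.sin_sub]
    by_contra hcon
    push_neg at hcon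
    nlinarith [mul_nonneg hrpos.le (neg_nonneg.2 hcon)]
  have hreduce : ∀ θ, Spred θ →
      ∃ k : ℤ, (θ - 2*π*k) ∈ Ioo (φ - π) φ ∧ Spred (θ - 2*π*k) := by
    intro θ hθ
    have h2π : 0 < 2*π := by positivity
    set k : ℤ := ⌊(θ - (φ - π)) / (2*π)⌋ with hk
    have hk1 : (k:ℝ) * (2*π) ≤ θ - (φ - π) := by
      rw [← le_div_iff₀ h2π]
      exact Int.floor_le _
    have hk2 : θ - (φ - π) < ((k:ℝ) + 1) * (2*π) := by
      rw [← div_lt_iff₀ h2π]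
      exact Int.lt_floor_add_one _
    have hS' : Spred (θ - 2*π*k) := by
      have h' := hperiod (θ - 2*π*k) k
      rw [show θ - 2*π*(k:ℝ) + 2*π*(k:ℝ) = θ by ring] at h'
      exact h'.mp hθ
    have hsin' := hsinpos _ hS'
    have hb1 : φ - π ≤ θ - 2*π*k := by nlinarith
    have hb2 : θ - 2*π*k < φ + π := by nlinarith
    refine ⟨k, ⟨?_, ?_⟩, hS'⟩
    · rcases eq_or_lt_of_le hb1 with he | h
      · exfalso
        rw [← he, show φ - (φ - π) = π by ring, Real.sin_pi] at hsin'
        exact lt_irrefl _ hsin'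
      · exact h
    · by_contra hcon
      push_neg at hcon
      have hle0 : Real.sin (φ - (θ - 2*π*k)) ≤ 0 := by
        rcases eq_or_lt_of_le hcon with he | h
        · rw [← he]; simp
        · exact le_of_lt (Real.sin_neg_of_neg_of_neg_pi_lt (by linarith) (by linarith))
      linarith
  set S₀ : Set ℝ := {θ | Spred θ} ∩ Icc (φ - π) φ with hS₀
  have hS₀sub : S₀ ⊆ Ioo (φ - π) φ := by
    rintro θ ⟨h1, h2⟩
    have hs := hsinpos θ h1
    constructor
    · rcases eq_or_lt_of_le h2.1 with he | h
      · exfalso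
        rw [← he, show φ - (φ - π) = π by ring, Real.sin_pi] at hs
        exact lt_irrefl _ hs
      · exact h
    · rcases eq_or_lt_of_le h2.2 with he | h
      · exfalso
        rw [he, sub_self, Real.sin_zero] at hs
        exact lt_irrefl _ hs
      · exact h
  have hSclosed : IsClosed {θ | Spred θ} := by
    have heq : {θ | Spred θ}
        = ⋂ x ∈ K, {θ | crossProd (dirVec θ) P ≤ crossProd (dirVec θ) x} := by
      ext θ
      simp [hSpred]
    rw [heq]
    refine isClosed_biInter fun x hx => ?_
    have heq2 : {θ | crossProd (dirVec θ) P ≤ crossProd (dirVec θ) x}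
        = {θ : ℝ | Real.cos θ * P 1 - Real.sin θ * P 0
            ≤ Real.cos θ * x 1 - Real.sin θ * x 0} := by
      simp [crossProd_dirVec]
    rw [heq2]
    exact isClosed_le (by fun_prop) (by fun_prop)
  have hclosed : IsClosed S₀ := hSclosed.inter isClosed_Icc
  have hcomp : IsCompact S₀ :=
    isCompact_Icc.of_isClosed_subset hclosed inter_subset_right
  obtain ⟨k₀, hk₀Ioo, hk₀S⟩ := hreduce θ₀ hθ₀
  have hne : S₀.Nonempty := ⟨θ₀ - 2*π*k₀, hk₀S, Ioo_subset_Icc_self hk₀Ioo⟩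
  set α : ℝ := sInf S₀ with hα
  set β : ℝ := sSup S₀ with hβ
  have hαmem : α ∈ S₀ := hcomp.sInf_mem hne
  have hβmem : β ∈ S₀ := hcomp.sSup_mem hne
  have hαβ : α ≤ β := csInf_le_csSup hne hcomp.bddBelow hcomp.bddAbove
  have hIooα := hS₀sub hαmem
  have hIooβ := hS₀sub hβmem
  refine ⟨α, β - α, by linarith, by linarith [hIooα.1, hIooβ.2], ?_⟩
  intro θ
  rw [hmemiff θ]
  constructor
  · intro hθ
    obtain ⟨k, hIoo, hS'⟩ := hreduce θ hθ
    have hmem' : θ - 2*π*k ∈ S₀ := ⟨hS', Ioo_subset_Icc_self hIoo⟩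
    refine ⟨θ - 2*π*k, ⟨csInf_le hcomp.bddBelow hmem', ?_⟩, k, by ring⟩
    have hle' : θ - 2*π*k ≤ β := le_csSup hcomp.bddAbove hmem'
    linarith
  · rintro ⟨t, ⟨ht1, ht2⟩, k, rfl⟩
    have htmem : Spred t := by
      rcases eq_or_lt_of_le hαβ with he | hlt
      · have ht : t = α := le_antisymm (by rw [← he] at ht2; linarith) ht1
        rw [ht]
        exact hαmem.1
      · exact cross_between hαmem.1 hβmem.1 ht1 (by linarith) hlt
          (by linarith [hIooα.1, hIooβ.2])
    exact (hperiod t k).mpr htmem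

end
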